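/- No R(4,4;3)-good hypergraph on a 12-element set has a transitive automorphism group; that is, for every R(4,4;3)-good hypergraph G on a 12-element set V, the group of permutations of V preserving the edge set of G does not act transitively on V. -/

import Mathlib

/-- A 3-uniform hypergraph `G` on `Fin n` is `R(4,4;3)`-good if every
4-element subset contains at least one and at most three edges of `G`. -/
def IsGood {n : ℕ} (G : Finset (Finset (Fin n))) : Prop :=
  (∀ e ∈ G, e.card = 3) ∧
  ∀ Q : Finset (Fin n), Q.card = 4 →
    1 ≤ (Q.powersetCard 3 ∩ G).card ∧ (Q.powersetCard 3 ∩ G).card ≤ 3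

namespace NoGood12

open Finset

abbrev V : Type := Fin 12

/-- Number of edges of `G` inside a set `Q`. -/
def eN (G : Finset (Finset V)) (Q : Finset V) : ℕ := (Q.powersetCard 3 ∩ G).card

/-- Number of edges of `G` containing a given pair `p`. -/
def dN (G : Finset (Finset V)) (p : Finset V) : ℕ := (G.filter (fun e => p ⊆ e)).card

def Quads : Finset (Finset V) := (univ : Finset V).powersetCard 4
def Pairs : Finset (Finset V) := (univ : Finset V).powersetCard 2

/-- Ordered pairs of distinct edges whose union has four points. -/
def W (G : Finset (Finset V)) : Finset (Finset V × Finset V) :=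
  (G ×ˢ G).filter (fun ef => ef.1 ≠ ef.2 ∧ (ef.1 ∪ ef.2).card = 4)

/-- Quads with exactly one edge. -/
def AA (G : Finset (Finset V)) : Finset (Finset V) := Quads.filter (fun Q => eN G Q = 1)

def BB (G : Finset (Finset V)) : Finset (V × Finset V) :=
  (univ ×ˢ AA G).filter (fun z => z.1 ∈ z.2 ∧ z.2.erase z.1 ∈ G)

def aX (G : Finset (Finset V)) (x : V) : ℕ :=
  ((AA G).filter (fun Q => x ∈ Q ∧ Q.erase x ∈ G)).card

def SS (G : Finset (Finset V)) (x : V) : ℕ :=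
  ∑ y ∈ univ.filter (fun y => x ≠ y), (dN G {x, y} * dN G {x, y} - dN G {x, y})

lemma sq_sub_even (n : ℕ) : (n * n - n) % 2 = 0 := by
  have h := Nat.even_mul_pred_self n
  have h2 : n * (n - 1) = n * n - n := by
    rcases n with _ | k
    · rfl
    · rw [Nat.succ_sub_one]
      have h3 : (k + 1) * (k + 1) = (k + 1) * k + (k + 1) := by ring
      rw [h3]
      omega
  rw [h2] at h
  exact Nat.even_iff.mp h

lemma card_inter_le {G : Finset (Finset V)} (h3 : ∀ e ∈ G, e.card = 3) {e f : Finset V}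
    (he : e ∈ G) (hf : f ∈ G) (hne : e ≠ f) : (e ∩ f).card ≤ 2 := by
  by_contra h
  push_neg at h
  have he3 := h3 e he
  have hf3 := h3 f hf
  have h1 : e ∩ f = e := eq_of_subset_of_card_le inter_subset_left (by omega)
  have hef : e ⊆ f := by rw [← h1]; exact inter_subset_right
  exact hne (eq_of_subset_of_card_le hef (by omega))

lemma W_fiber_quad (G : Finset (Finset V)) (h3 : ∀ e ∈ G, e.card = 3) (Q : Finset V)
    (hQ4 : Q.card = 4) :
    (W G).filter (fun ef => ef.1 ∪ ef.2 = Q) = (Q.powersetCard 3 ∩ G).offDiag := by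
  ext ⟨e, f⟩
  simp only [W, mem_filter, mem_product, mem_offDiag, mem_inter, mem_powersetCard, ne_eq]
  constructor
  · rintro ⟨⟨⟨he, hf⟩, hne, hcard⟩, hQ⟩
    subst hQ
    exact ⟨⟨⟨subset_union_left, h3 e he⟩, he⟩, ⟨⟨subset_union_right, h3 f hf⟩, hf⟩, hne⟩
  · rintro ⟨⟨⟨heQ, he3⟩, he⟩, ⟨⟨hfQ, hf3⟩, hf⟩, hne⟩
    have hle := card_inter_le h3 he hf hne
    have hsum := card_union_add_card_inter e f
    have hsub : e ∪ f ⊆ Q := union_subset heQ hfQ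
    have hunion : e ∪ f = Q := eq_of_subset_of_card_le hsub (by omega)
    exact ⟨⟨⟨he, hf⟩, hne, by rw [hunion]; exact hQ4⟩, hunion⟩

lemma W_fiber_pair (G : Finset (Finset V)) (h3 : ∀ e ∈ G, e.card = 3) (p : Finset V)
    (hp2 : p.card = 2) :
    (W G).filter (fun ef => ef.1 ∩ ef.2 = p) = (G.filter (fun e => p ⊆ e)).offDiag := by
  ext ⟨e, f⟩
  simp only [W, mem_filter, mem_product, mem_offDiag, ne_eq]
  constructor
  · rintro ⟨⟨⟨he, hf⟩, hne, hcard⟩, hp⟩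
    subst hp
    exact ⟨⟨he, inter_subset_left⟩, ⟨hf, inter_subset_right⟩, hne⟩
  · rintro ⟨⟨he, hpe⟩, ⟨hf, hpf⟩, hne⟩
    have hle := card_inter_le h3 he hf hne
    have hint : e ∩ f = p :=
      (eq_of_subset_of_card_le (subset_inter hpe hpf) (by omega)).symm
    have hsum := card_union_add_card_inter e f
    have he3 := h3 e he
    have hf3 := h3 f hf
    refine ⟨⟨⟨he, hf⟩, hne, ?_⟩, hint⟩
    have h2 : (e ∩ f).card = 2 := by rw [hint]; exact hp2
    omega

lemma W_card_quads (G : Finset (Finset V)) (h3 : ∀ e ∈ G, e.card = 3) :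
    (W G).card = ∑ Q ∈ Quads, (eN G Q * eN G Q - eN G Q) := by
  rw [card_eq_sum_card_fiberwise (f := fun ef => ef.1 ∪ ef.2) (t := Quads)
    (fun ef (hef : ef ∈ W G) => by
      simp only [W, mem_filter, mem_product] at hef
      exact mem_powersetCard.mpr ⟨subset_univ _, hef.2.2⟩)]
  refine sum_congr rfl fun Q hQ => ?_
  have hQ4 : Q.card = 4 := (mem_powersetCard.mp hQ).2
  rw [show {a ∈ W G | a.1 ∪ a.2 = Q} = (W G).filter (fun ef => ef.1 ∪ ef.2 = Q) from rfl,
    W_fiber_quad G h3 Q hQ4, offDiag_card]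
  rfl

lemma W_card_pairs (G : Finset (Finset V)) (h3 : ∀ e ∈ G, e.card = 3) :
    (W G).card = ∑ p ∈ Pairs, (dN G p * dN G p - dN G p) := by
  rw [card_eq_sum_card_fiberwise (f := fun ef => ef.1 ∩ ef.2) (t := Pairs)
    (fun ef (hef : ef ∈ W G) => by
      simp only [W, mem_filter, mem_product] at hef
      obtain ⟨⟨he, hf⟩, _, hcard⟩ := hef
      have hsum := card_union_add_card_inter ef.1 ef.2
      have he3 := h3 _ he
      have hf3 := h3 _ hf
      exact mem_powersetCard.mpr ⟨subset_univ _, by show (ef.1 ∩ ef.2).card = 2; omega⟩)]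
  refine sum_congr rfl fun p hp => ?_
  have hp2 : p.card = 2 := (mem_powersetCard.mp hp).2
  rw [show {a ∈ W G | a.1 ∩ a.2 = p} = (W G).filter (fun ef => ef.1 ∩ ef.2 = p) from rfl,
    W_fiber_pair G h3 p hp2, offDiag_card]
  rfl

section Aut

variable (G : Finset (Finset V)) (σ : Equiv.Perm V)

lemma inv_aut (hσ : G.image (fun e => e.image σ) = G) :
    G.image (fun e => e.image σ.symm) = G := by
  conv_lhs => rw [← hσ]
  rw [image_image]
  have h : ((fun e : Finset V => e.image σ.symm) ∘ (fun e : Finset V => e.image σ)) = id := by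
    funext e
    simp [Finset.image_image]
  rw [h, image_id]

lemma mem_aut (hσ : G.image (fun e => e.image σ) = G) (e : Finset V) :
    e.image σ ∈ G ↔ e ∈ G := by
  constructor
  · intro h
    have h2 : (e.image σ).image σ.symm ∈ G := by
      rw [← inv_aut G σ hσ]
      exact mem_image_of_mem _ h
    simpa [Finset.image_image] using h2
  · intro h
    rw [← hσ]
    exact mem_image_of_mem _ h

lemma dN_aut (hσ : G.image (fun e => e.image σ) = G) (p : Finset V) :
    dN G (p.image σ) = dN G p := by
  unfold dN
  refine Finset.card_bij' (fun e _ => e.image σ.symm) (fun e _ => e.image σ) ?_ ?_ ?_ ?_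
  · intro e he
    rw [mem_filter] at he ⊢
    refine ⟨(mem_aut G σ.symm (inv_aut G σ hσ) e).mpr he.1, ?_⟩
    have h2 := image_subset_image (f := σ.symm) he.2
    simpa [Finset.image_image] using h2
  · intro e he
    rw [mem_filter] at he ⊢
    exact ⟨(mem_aut G σ hσ e).mpr he.1, image_subset_image he.2⟩
  · intro e _
    simp [Finset.image_image]
  · intro e _
    simp [Finset.image_image]

lemma F_inj : Function.Injective (fun s : Finset V => s.image σ) := by
  intro a b h
  have h2 := congrArg (Finset.image σ.symm) h
  simpa [Finset.image_image] using h2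

lemma powersetCard_image (Q : Finset V) (k : ℕ) :
    (Q.image σ).powersetCard k = (Q.powersetCard k).image (fun s => s.image σ) := by
  ext s
  simp only [mem_powersetCard, mem_image]
  constructor
  · rintro ⟨hsub, hcard⟩
    refine ⟨s.image σ.symm, ⟨?_, by rw [card_image_of_injective _ σ.symm.injective]; exact hcard⟩,
      by simp [Finset.image_image]⟩
    have h2 := image_subset_image (f := σ.symm) hsub
    simpa [Finset.image_image] using h2
  · rintro ⟨t, ⟨hsub, hcard⟩, rfl⟩
    exact ⟨image_subset_image hsub, by rw [card_image_of_injective _ σ.injective]; exact hcard⟩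

lemma eN_aut (hσ : G.image (fun e => e.image σ) = G) (Q : Finset V) :
    eN G (Q.image σ) = eN G Q := by
  unfold eN
  conv_lhs => rw [powersetCard_image σ Q 3, ← hσ, ← image_inter _ _ (F_inj σ)]
  rw [card_image_of_injective _ (F_inj σ)]

lemma SS_aut (hσ : G.image (fun e => e.image σ) = G) (v : V) :
    SS G v = SS G (σ v) := by
  unfold SS
  refine Finset.sum_bij' (fun y _ => σ y) (fun y _ => σ.symm y) ?_ ?_ ?_ ?_ ?_
  · intro y hy
    simp only [mem_filter, mem_univ, true_and] at hy ⊢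
    exact fun h => hy (σ.injective h)
  · intro y hy
    simp only [mem_filter, mem_univ, true_and] at hy ⊢
    intro h
    exact hy (by rw [h, Equiv.apply_symm_apply])
  · intro y _; simp
  · intro y _; simp
  · intro y _
    have hpair : ({σ v, σ y} : Finset V) = ({v, y} : Finset V).image σ := by
      simp [Finset.image_insert, Finset.image_singleton]
    rw [hpair, dN_aut G σ hσ]

lemma aX_aut (hσ : G.image (fun e => e.image σ) = G) (v : V) :
    aX G v = aX G (σ v) := by
  unfold aX
  refine Finset.card_bij' (fun Q _ => Q.image σ) (fun Q _ => Q.image σ.symm) ?_ ?_ ?_ ?_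
  · intro Q hQ
    simp only [mem_filter, AA, Quads, mem_powersetCard] at hQ ⊢
    obtain ⟨⟨⟨-, hQ4⟩, hQ1⟩, hvQ, hQG⟩ := hQ
    refine ⟨⟨⟨subset_univ _, by rw [card_image_of_injective _ σ.injective]; exact hQ4⟩,
      by rw [eN_aut G σ hσ]; exact hQ1⟩, mem_image_of_mem _ hvQ, ?_⟩
    rw [← Finset.image_erase σ.injective]
    exact (mem_aut G σ hσ _).mpr hQG
  · intro Q hQ
    simp only [mem_filter, AA, Quads, mem_powersetCard] at hQ ⊢
    obtain ⟨⟨⟨-, hQ4⟩, hQ1⟩, hvQ, hQG⟩ := hQ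
    refine ⟨⟨⟨subset_univ _, by rw [card_image_of_injective _ σ.symm.injective]; exact hQ4⟩,
      by rw [eN_aut G σ.symm (inv_aut G σ hσ)]; exact hQ1⟩, ?_, ?_⟩
    · have h2 := mem_image_of_mem σ.symm hvQ
      simpa using h2
    · have heq : (Q.image σ.symm).erase v = (Q.erase (σ v)).image σ.symm := by
        rw [Finset.image_erase σ.symm.injective]
        simp
      rw [heq]
      exact (mem_aut G σ.symm (inv_aut G σ hσ) _).mpr hQG
  · intro Q _; simp [Finset.image_image]
  · intro Q _; simp [Finset.image_image]

end Aut

lemma ordered_sum (h : Finset V → ℕ) :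
    ∑ z ∈ (univ ×ˢ univ).filter (fun z : V × V => z.1 ≠ z.2), h {z.1, z.2}
      = ∑ x : V, ∑ y ∈ univ.filter (fun y => x ≠ y), h {x, y} := by
  rw [sum_filter, Finset.sum_product]
  exact sum_congr rfl fun x _ => (sum_filter _ _).symm

lemma ordered_sum_pairs (h : Finset V → ℕ) :
    ∑ z ∈ (univ ×ˢ univ).filter (fun z : V × V => z.1 ≠ z.2), h {z.1, z.2}
      = 2 * ∑ p ∈ Pairs, h p := by
  rw [sum_comp h (fun z : V × V => ({z.1, z.2} : Finset V))]
  have himg : ((univ ×ˢ univ).filter (fun z : V × V => z.1 ≠ z.2)).image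
      (fun z : V × V => ({z.1, z.2} : Finset V)) = Pairs := by
    ext p
    simp only [mem_image, mem_filter, mem_product, mem_univ, true_and, Pairs,
      mem_powersetCard]
    constructor
    · rintro ⟨z, hne, rfl⟩
      exact ⟨subset_univ _, by rw [card_insert_of_notMem (by simpa using hne), card_singleton]⟩
    · rintro ⟨-, hp⟩
      obtain ⟨x, y, hxy, rfl⟩ := card_eq_two.mp hp
      exact ⟨(x, y), hxy, rfl⟩
  rw [himg, Finset.mul_sum]
  refine sum_congr rfl fun p hp => ?_
  have hp2 : p.card = 2 := (mem_powersetCard.mp hp).2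
  obtain ⟨x, y, hxy, rfl⟩ := card_eq_two.mp hp2
  have hfib : ((univ ×ˢ univ).filter (fun z : V × V => z.1 ≠ z.2)).filter
      (fun z : V × V => ({z.1, z.2} : Finset V) = {x, y})
      = ({(x, y), (y, x)} : Finset (V × V)) := by
    ext z
    simp only [mem_filter, mem_product, mem_univ, true_and, mem_insert, mem_singleton]
    constructor
    · rintro ⟨hne, hset⟩
      have hz1 : z.1 ∈ ({x, y} : Finset V) := by
        rw [← hset]; exact mem_insert_self _ _
      have hz2 : z.2 ∈ ({x, y} : Finset V) := by
        rw [← hset]; exact mem_insert_of_mem (mem_singleton_self _)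
      simp only [mem_insert, mem_singleton] at hz1 hz2
      rcases hz1 with h1 | h1 <;> rcases hz2 with h2 | h2
      · exact absurd (h1.trans h2.symm) hne
      · left; exact Prod.ext h1 h2
      · right; exact Prod.ext h1 h2
      · exact absurd (h1.trans h2.symm) hne
    · rintro (rfl | rfl)
      · exact ⟨hxy, rfl⟩
      · exact ⟨hxy.symm, Finset.pair_comm y x⟩
  have hfc : (((univ ×ˢ univ).filter (fun z : V × V => z.1 ≠ z.2)).filter
      (fun z : V × V => ({z.1, z.2} : Finset V) = {x, y})).card = 2 := by
    rw [hfib, card_insert_of_notMem (by simp [Prod.ext_iff, hxy]), card_singleton]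
  rw [show {a ∈ (univ ×ˢ univ).filter (fun z : V × V => z.1 ≠ z.2) |
      (fun z : V × V => ({z.1, z.2} : Finset V)) a = {x, y}} =
      ((univ ×ˢ univ).filter (fun z : V × V => z.1 ≠ z.2)).filter
      (fun z : V × V => ({z.1, z.2} : Finset V) = {x, y}) from rfl, hfc]
  rw [smul_eq_mul]

lemma BB_fiber (G : Finset (Finset V)) (Q : Finset V) (hQA : Q ∈ AA G) :
    ((BB G).filter (fun z => z.2 = Q)).card = 1 := by
  simp only [AA, mem_filter, Quads, mem_powersetCard] at hQA
  obtain ⟨⟨-, hQ4⟩, hQ1⟩ := hQA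
  obtain ⟨e, he⟩ := card_eq_one.mp hQ1
  have heMem : e ∈ Q.powersetCard 3 ∩ G := by rw [he]; exact mem_singleton_self e
  rw [mem_inter, mem_powersetCard] at heMem
  obtain ⟨⟨heQ, he3⟩, heG⟩ := heMem
  have hsd : (Q \ e).card = 1 := by rw [card_sdiff_of_subset heQ]; omega
  obtain ⟨x, hx⟩ := card_eq_one.mp hsd
  have hxQ : x ∈ Q ∧ x ∉ e := by
    have h2 : x ∈ Q \ e := by rw [hx]; exact mem_singleton_self x
    exact ⟨(mem_sdiff.mp h2).1, (mem_sdiff.mp h2).2⟩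
  have herase : Q.erase x = e := by
    refine (eq_of_subset_of_card_le (subset_erase.mpr ⟨heQ, hxQ.2⟩) ?_).symm
    rw [card_erase_of_mem hxQ.1]
    omega
  rw [card_eq_one]
  refine ⟨(x, Q), ?_⟩
  ext z
  simp only [BB, mem_filter, mem_product, mem_univ, true_and, mem_singleton]
  constructor
  · rintro ⟨⟨hzA, hz1, hzG⟩, rfl⟩
    have hzps : z.2.erase z.1 ∈ (z.2.powersetCard 3) ∩ G := by
      rw [mem_inter, mem_powersetCard]
      exact ⟨⟨erase_subset _ _, by rw [card_erase_of_mem hz1]; omega⟩, hzG⟩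
    rw [he, mem_singleton] at hzps
    have hz1e : z.1 ∉ e := by rw [← hzps]; exact notMem_erase _ _
    have hzx : z.1 ∈ z.2 \ e := mem_sdiff.mpr ⟨hz1, hz1e⟩
    rw [hx, mem_singleton] at hzx
    exact Prod.ext hzx rfl
  · rintro rfl
    refine ⟨⟨?_, hxQ.1, by rw [herase]; exact heG⟩, rfl⟩
    simp only [AA, mem_filter, Quads, mem_powersetCard]
    exact ⟨⟨subset_univ _, hQ4⟩, hQ1⟩

lemma BB_card_A (G : Finset (Finset V)) : (BB G).card = (AA G).card := by
  rw [card_eq_sum_card_fiberwise (f := fun z : V × Finset V => z.2) (t := AA G)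
    (fun z (hz : z ∈ BB G) => by
      simp only [BB, mem_filter, mem_product] at hz
      exact hz.1.2)]
  trans ∑ _Q ∈ AA G, 1
  · exact sum_congr rfl fun Q hQ => BB_fiber G Q hQ
  · simp

lemma BB_card_sum (G : Finset (Finset V)) : (BB G).card = ∑ x : V, aX G x := by
  rw [card_eq_sum_card_fiberwise (f := fun z : V × Finset V => z.1) (t := univ)
    (fun z _ => mem_univ _)]
  refine sum_congr rfl fun x _ => ?_
  have h2 : {z ∈ BB G | z.1 = x}
      = ({x} : Finset V) ×ˢ ((AA G).filter (fun Q => x ∈ Q ∧ Q.erase x ∈ G)) := by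
    ext z
    simp only [BB, mem_filter, mem_product, mem_univ, true_and, mem_singleton]
    constructor
    · rintro ⟨⟨hzA, hz1, hzG⟩, rfl⟩
      exact ⟨rfl, hzA, hz1, hzG⟩
    · rintro ⟨rfl, hzA, hz1, hzG⟩
      exact ⟨⟨hzA, hz1, hzG⟩, rfl⟩
  rw [h2, card_product, card_singleton, one_mul]
  rfl

end NoGood12

open Finset NoGood12

/-- No `R(4,4;3)`-good hypergraph on a 12-element set has a transitive
automorphism group: for every good `G` it is not the case that every point
can be mapped to every other point by a permutation preserving the edge set. -/
theorem no_good_12_with_transitive_aut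
    (G : Finset (Finset (Fin 12))) (hG : IsGood G) :
    ¬ ∀ v w : Fin 12, ∃ σ : Equiv.Perm (Fin 12),
        G.image (fun e => e.image σ) = G ∧ σ v = w := by
  intro htrans
  obtain ⟨h3, hgood⟩ := hG
  have hQcard : Quads.card = 495 := by
    rw [Quads, card_powersetCard, card_univ]
    decide
  -- the mod-4 count over all quads
  have hmod : (∑ Q ∈ Quads, ((eN G Q * eN G Q - eN G Q)
      + 2 * (if eN G Q = 1 then 1 else 0))) % 4 = 2 := by
    rw [Finset.sum_nat_mod]
    have hpt : ∀ Q ∈ Quads, ((eN G Q * eN G Q - eN G Q)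
        + 2 * (if eN G Q = 1 then 1 else 0)) % 4 = 2 := by
      intro Q hQ
      have h14 := hgood Q (mem_powersetCard.mp hQ).2
      have h123 : eN G Q = 1 ∨ eN G Q = 2 ∨ eN G Q = 3 := by
        unfold eN
        omega
      rcases h123 with h | h | h <;> rw [h] <;> norm_num
    rw [sum_congr rfl hpt, sum_const, hQcard, smul_eq_mul]
  -- split the sum
  have hsum_ite : ∑ Q ∈ Quads, (if eN G Q = 1 then (1 : ℕ) else 0) = (AA G).card := by
    rw [AA]
    simp [Finset.sum_boole]
  have hsplit : ∑ Q ∈ Quads, ((eN G Q * eN G Q - eN G Q)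
      + 2 * (if eN G Q = 1 then 1 else 0))
      = (∑ Q ∈ Quads, (eN G Q * eN G Q - eN G Q)) + 2 * (AA G).card := by
    rw [sum_add_distrib, ← Finset.mul_sum, hsum_ite]
  -- transitivity: all SS equal
  have hSS : ∀ x : V, SS G x = SS G 0 := by
    intro x
    obtain ⟨σ, hσ, h0⟩ := htrans 0 x
    rw [← h0, ← SS_aut G σ hσ 0]
  have haX : ∀ x : V, aX G x = aX G 0 := by
    intro x
    obtain ⟨σ, hσ, h0⟩ := htrans 0 x
    rw [← h0, ← aX_aut G σ hσ 0]
  -- 2 * (pair sum) = 12 * SS G 0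
  have hNP : 2 * (∑ p ∈ Pairs, (dN G p * dN G p - dN G p)) = 12 * SS G 0 := by
    rw [← ordered_sum_pairs (fun p => dN G p * dN G p - dN G p),
      ordered_sum (fun p => dN G p * dN G p - dN G p)]
    have hx : ∀ x : V, (∑ y ∈ univ.filter (fun y => x ≠ y),
        (dN G {x, y} * dN G {x, y} - dN G {x, y})) = SS G 0 := fun x => hSS x
    rw [sum_congr rfl fun x _ => hx x, sum_const, card_univ]
    simp [Fintype.card_fin]
  have hSeven : SS G 0 % 2 = 0 := by
    rw [SS, Finset.sum_nat_mod]
    have hpt : ∀ y ∈ univ.filter (fun y => (0 : V) ≠ y),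
        (dN G {0, y} * dN G {0, y} - dN G {0, y}) % 2 = 0 :=
      fun y _ => sq_sub_even _
    rw [sum_congr rfl hpt]
    simp
  -- quad sum ≡ 0 mod 4
  have hNQ4 : (∑ Q ∈ Quads, (eN G Q * eN G Q - eN G Q)) % 4 = 0 := by
    have heq : (∑ Q ∈ Quads, (eN G Q * eN G Q - eN G Q))
        = ∑ p ∈ Pairs, (dN G p * dN G p - dN G p) := by
      rw [← W_card_quads G h3, W_card_pairs G h3]
    rw [heq]
    omega
  -- a ≡ 0 mod 12 hence 2a ≡ 0 mod 4
  have haA : (AA G).card = 12 * aX G 0 := by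
    rw [← BB_card_A G, BB_card_sum G, sum_congr rfl fun x _ => haX x, sum_const, card_univ]
    simp [Fintype.card_fin]
  omega
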